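/- The modular S and T matrices of the Z_N topological order satisfy (ST)³ = S², where S_{(α,β),(α',β')} = (1/N)exp(2πi(αβ'+βα')/N) and T_{(α,β),(α',β')} = exp(−2πi αβ/N)·δ_{(α,β),(α',β')}. -/

import Mathlib

open Complex Finset in
private noncomputable def EE (N : ℕ) (n : ℤ) : ℂ := Complex.exp (2 * Real.pi * I * n / N)

section helpers
open Complex Finset
variable (N : ℕ) [NeZero N]

private lemma EE_add (a b : ℤ) : EE N (a + b) = EE N a * EE N b := by
  rw [EE, EE, EE, ← Complex.exp_add]
  congr 1
  push_cast
  ring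

private lemma EE_nmul (k : ℤ) : EE N ((N : ℤ) * k) = 1 := by
  have hN : (N : ℂ) ≠ 0 := Nat.cast_ne_zero.2 (NeZero.ne N)
  rw [EE, show 2 * Real.pi * I * ((((N:ℤ) * k : ℤ)) : ℂ) / N = k * (2 * Real.pi * I) by
    push_cast; field_simp]
  exact Complex.exp_int_mul_two_pi_mul_I k

private lemma EE_congr {a b : ℤ} (h : (a : ZMod N) = (b : ZMod N)) : EE N a = EE N b := by
  have hd : (N : ℤ) ∣ a - b := by
    rwa [← ZMod.intCast_zmod_eq_zero_iff_dvd, Int.cast_sub, sub_eq_zero]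
  obtain ⟨k, hk⟩ := hd
  have : a = b + (N : ℤ) * k := by omega
  rw [this, EE_add, EE_nmul, mul_one]

private lemma EE_eq_one_iff (a : ℤ) : EE N a = 1 ↔ (a : ZMod N) = 0 := by
  constructor
  · intro h
    rw [EE, Complex.exp_eq_one_iff] at h
    obtain ⟨n, hn⟩ := h
    have hN : (N : ℂ) ≠ 0 := Nat.cast_ne_zero.2 (NeZero.ne N)
    have hpi : (Real.pi : ℂ) ≠ 0 := by exact_mod_cast Real.pi_ne_zero
    have h2 : (2 : ℂ) * Real.pi * I ≠ 0 := by simp [hpi, Complex.I_ne_zero]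
    field_simp at hn
    have hca : (a : ℂ) = n * N :=
      mul_left_cancel₀ h2 (show 2 * Real.pi * I * (a:ℂ) = 2 * Real.pi * I * (n * N) by
        linear_combination (2 * Real.pi * I) * hn)
    have : a = n * N := by exact_mod_cast hca
    rw [this]
    push_cast
    simp
  · intro h
    rw [ZMod.intCast_zmod_eq_zero_iff_dvd] at h
    obtain ⟨k, hk⟩ := h
    rw [hk, EE_nmul]

private noncomputable def ee (a : ZMod N) : ℂ := EE N a.val

private lemma ee_eq (a : ZMod N) {n : ℤ} (h : (n : ZMod N) = a) : ee N a = EE N n := by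
  apply EE_congr
  rw [h]
  simp [ZMod.natCast_val, ZMod.intCast_cast]

private lemma ee_add (a b : ZMod N) : ee N (a + b) = ee N a * ee N b := by
  rw [ee_eq N (a+b) (n := (a.val : ℤ) + b.val) (by push_cast; simp [ZMod.natCast_val]),
    EE_add]
  rfl

private lemma ee_zero : ee N 0 = 1 := by
  rw [ee_eq N 0 (n := 0) (by simp)]
  simp [EE, Complex.exp_zero]

private lemma ee_eq_one_iff (a : ZMod N) : ee N a = 1 ↔ a = 0 := by
  rw [ee, EE_eq_one_iff]
  simp [ZMod.natCast_val]

private lemma sum_ee (a : ZMod N) :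
    ∑ k : ZMod N, ee N (a * k) = if a = 0 then (N : ℂ) else 0 := by
  split_ifs with h
  · subst h
    simp [ee_zero, ZMod.card]
  · have key : ee N a * ∑ k : ZMod N, ee N (a * k) = ∑ k : ZMod N, ee N (a * k) := by
      rw [Finset.mul_sum]
      rw [← Equiv.sum_comp (Equiv.addRight 1) (fun k => ee N (a * k))]
      apply Finset.sum_congr rfl
      intro k _
      rw [← ee_add]
      congr 1
      simp [Equiv.addRight]
      ring
    have hne : ee N a - 1 ≠ 0 := by
      intro hc
      exact h ((ee_eq_one_iff N a).1 (by rw [sub_eq_zero] at hc; exact hc))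
    have h0 : (ee N a - 1) * ∑ k : ZMod N, ee N (a * k) = 0 := by
      rw [sub_mul, one_mul, key, sub_self]
    exact (mul_eq_zero.1 h0).resolve_left hne

end helpers

open Complex in
/-- The modular S and T matrices of the `Z_N` topological order satisfy `(ST)³ = S²`,
where `S_{(α,β),(α',β')} = (1/N) exp (2πi (αβ' + βα')/N)` and
`T_{(α,β),(α',β')} = exp (−2πi αβ/N) δ_{(α,β),(α',β')}`. -/
theorem stmt_15 (N : ℕ) [NeZero N] :
    let S : Matrix (ZMod N × ZMod N) (ZMod N × ZMod N) ℂ :=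
      Matrix.of fun x y =>
        (1 / (N : ℂ)) * Complex.exp (2 * Real.pi * I *
          ((x.1.val : ℂ) * (y.2.val : ℂ) + (x.2.val : ℂ) * (y.1.val : ℂ)) / (N : ℂ))
    let T : Matrix (ZMod N × ZMod N) (ZMod N × ZMod N) ℂ :=
      Matrix.diagonal fun x =>
        Complex.exp (-(2 * Real.pi * I) * ((x.1.val : ℂ) * (x.2.val : ℂ)) / (N : ℂ))
    (S * T) ^ 3 = S ^ 2 := by
  intro S T
  have hN : (N : ℂ) ≠ 0 := Nat.cast_ne_zero.2 (NeZero.ne N)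
  -- entry formulas in terms of the character `ee`
  have hS : ∀ x y : ZMod N × ZMod N,
      S x y = (1 / N) * ee N (x.1 * y.2 + x.2 * y.1) := by
    intro x y
    show (1 / (N:ℂ)) * _ = _
    congr 1
    rw [ee_eq N _ (n := (x.1.val : ℤ) * y.2.val + (x.2.val : ℤ) * y.1.val)
      (by push_cast [ZMod.natCast_val]; simp [ZMod.intCast_cast])]
    rw [EE]
    congr 1
    push_cast
    ring
  have hT : ∀ y : ZMod N × ZMod N,
      Complex.exp (-(2 * Real.pi * I) * ((y.1.val : ℂ) * (y.2.val : ℂ)) / (N : ℂ))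
        = ee N (-(y.1 * y.2)) := by
    intro y
    rw [ee_eq N _ (n := -((y.1.val : ℤ) * y.2.val))
      (by push_cast [ZMod.natCast_val]; simp [ZMod.intCast_cast])]
    rw [EE]
    congr 1
    push_cast
    ring
  have hST : ∀ x y : ZMod N × ZMod N,
      (S * T) x y = (1 / N) * ee N (x.1 * y.2 + x.2 * y.1 + -(y.1 * y.2)) := by
    intro x y
    rw [show (S * T) x y = S x y * Complex.exp (-(2 * Real.pi * I) *
        ((y.1.val : ℂ) * (y.2.val : ℂ)) / (N : ℂ)) from Matrix.mul_diagonal _ _ _ _,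
      hS, hT, mul_assoc, ← ee_add]
  -- square of S*T
  have hST2 : ∀ x z : ZMod N × ZMod N,
      ((S * T) * (S * T)) x z = (1 / N) * ee N (x.1 * x.2 + x.1 * z.2 + x.2 * z.1) := by
    intro x z
    rw [Matrix.mul_apply, Fintype.sum_prod_type]
    have step1 : ∀ y1 : ZMod N,
        ∑ y2 : ZMod N, (S * T) x (y1, y2) * (S * T) (y1, y2) z
          = (1/(N:ℂ))^2 * ee N (x.2 * y1 + y1 * z.2 + -(z.1 * z.2)) *
              (if x.1 + -y1 + z.1 = 0 then (N : ℂ) else 0) := by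
      intro y1
      have : ∀ y2 : ZMod N, (S * T) x (y1, y2) * (S * T) (y1, y2) z
          = (1/(N:ℂ))^2 * ee N (x.2 * y1 + y1 * z.2 + -(z.1 * z.2)) *
              ee N ((x.1 + -y1 + z.1) * y2) := by
        intro y2
        rw [hST, hST]
        simp only []
        rw [mul_mul_mul_comm, ← ee_add,
          show (x.1 * y2 + x.2 * y1 + -(y1 * y2)) + ((y1 : ZMod N) * z.2 + y2 * z.1 + -(z.1 * z.2))
            = (x.2 * y1 + y1 * z.2 + -(z.1 * z.2)) + (x.1 + -y1 + z.1) * y2 by ring,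
          ee_add]
        ring
      rw [Finset.sum_congr rfl (fun y2 _ => this y2), ← Finset.mul_sum, sum_ee]
    rw [Finset.sum_congr rfl (fun y1 _ => step1 y1)]
    have hcond : ∀ y1 : ZMod N, (x.1 + -y1 + z.1 = 0) ↔ y1 = x.1 + z.1 := by
      intro y1; constructor <;> intro h <;> [linear_combination -h; linear_combination -h]
    have : ∀ y1 : ZMod N,
        (1/(N:ℂ))^2 * ee N (x.2 * y1 + y1 * z.2 + -(z.1 * z.2)) *
            (if x.1 + -y1 + z.1 = 0 then (N : ℂ) else 0)
          = if y1 = x.1 + z.1 then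
              (1/(N:ℂ))^2 * ee N (x.2 * y1 + y1 * z.2 + -(z.1 * z.2)) * N else 0 := by
      intro y1
      rw [if_congr (hcond y1) rfl rfl, mul_ite, mul_zero]
    rw [Finset.sum_congr rfl (fun y1 _ => this y1), Finset.sum_ite_eq' Finset.univ]
    simp only [Finset.mem_univ, if_true]
    rw [show (x.2 * (x.1 + z.1) + (x.1 + z.1) * z.2 + -(z.1 * z.2) : ZMod N)
      = x.1 * x.2 + x.1 * z.2 + x.2 * z.1 by ring]
    field_simp
  -- closed form of the (S*T)^3 entries
  have hLHS : ∀ x w : ZMod N × ZMod N,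
      ((S * T) ^ 3) x w
        = (1/(N:ℂ))^2 * ee N (x.1 * x.2 + -(w.1 * w.2)) *
            ((if x.1 + w.1 = 0 then (N:ℂ) else 0) * (if x.2 + w.2 = 0 then (N:ℂ) else 0)) := by
    intro x w
    have hpow : (S * T) ^ 3 = ((S * T) * (S * T)) * (S * T) := by
      rw [pow_succ, pow_two]
    rw [hpow, Matrix.mul_apply, Fintype.sum_prod_type]
    have step1 : ∀ z1 : ZMod N,
        ∑ z2 : ZMod N, ((S * T) * (S * T)) x (z1, z2) * (S * T) (z1, z2) w
          = (1/(N:ℂ))^2 * ee N (x.1 * x.2 + -(w.1 * w.2)) * ee N ((x.2 + w.2) * z1) *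
              (if x.1 + w.1 = 0 then (N : ℂ) else 0) := by
      intro z1
      have : ∀ z2 : ZMod N, ((S * T) * (S * T)) x (z1, z2) * (S * T) (z1, z2) w
          = (1/(N:ℂ))^2 * ee N (x.1 * x.2 + -(w.1 * w.2)) * ee N ((x.2 + w.2) * z1) *
              ee N ((x.1 + w.1) * z2) := by
        intro z2
        rw [hST2, hST]
        simp only []
        rw [mul_mul_mul_comm, ← ee_add,
          show (x.1 * x.2 + x.1 * z2 + x.2 * z1) + ((z1 : ZMod N) * w.2 + z2 * w.1 + -(w.1 * w.2))
            = ((x.1 * x.2 + -(w.1 * w.2)) + (x.2 + w.2) * z1) + (x.1 + w.1) * z2 by ring,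
          ee_add, ee_add]
        ring
      rw [Finset.sum_congr rfl (fun z2 _ => this z2), ← Finset.mul_sum, sum_ee]
    rw [Finset.sum_congr rfl (fun z1 _ => step1 z1)]
    have step2 : ∀ z1 : ZMod N,
        (1/(N:ℂ))^2 * ee N (x.1 * x.2 + -(w.1 * w.2)) * ee N ((x.2 + w.2) * z1) *
            (if x.1 + w.1 = 0 then (N : ℂ) else 0)
          = ((1/(N:ℂ))^2 * ee N (x.1 * x.2 + -(w.1 * w.2)) *
              (if x.1 + w.1 = 0 then (N : ℂ) else 0)) * ee N ((x.2 + w.2) * z1) := by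
      intro z1; ring
    rw [Finset.sum_congr rfl (fun z1 _ => step2 z1), ← Finset.mul_sum, sum_ee]
    ring
  -- closed form of the S^2 entries
  have hRHS : ∀ x w : ZMod N × ZMod N,
      (S ^ 2) x w
        = (1/(N:ℂ))^2 *
            ((if x.1 + w.1 = 0 then (N:ℂ) else 0) * (if x.2 + w.2 = 0 then (N:ℂ) else 0)) := by
    intro x w
    rw [pow_two, Matrix.mul_apply, Fintype.sum_prod_type]
    have step1 : ∀ y1 : ZMod N,
        ∑ y2 : ZMod N, S x (y1, y2) * S (y1, y2) w
          = (1/(N:ℂ))^2 * ee N ((x.2 + w.2) * y1) *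
              (if x.1 + w.1 = 0 then (N : ℂ) else 0) := by
      intro y1
      have : ∀ y2 : ZMod N, S x (y1, y2) * S (y1, y2) w
          = (1/(N:ℂ))^2 * ee N ((x.2 + w.2) * y1) * ee N ((x.1 + w.1) * y2) := by
        intro y2
        rw [hS, hS]
        simp only []
        rw [mul_mul_mul_comm, ← ee_add,
          show (x.1 * y2 + x.2 * y1) + ((y1 : ZMod N) * w.2 + y2 * w.1)
            = (x.2 + w.2) * y1 + (x.1 + w.1) * y2 by ring,
          ee_add]
        ring
      rw [Finset.sum_congr rfl (fun y2 _ => this y2), ← Finset.mul_sum, sum_ee]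
    rw [Finset.sum_congr rfl (fun y1 _ => step1 y1)]
    have step2 : ∀ y1 : ZMod N,
        (1/(N:ℂ))^2 * ee N ((x.2 + w.2) * y1) * (if x.1 + w.1 = 0 then (N : ℂ) else 0)
          = ((1/(N:ℂ))^2 * (if x.1 + w.1 = 0 then (N : ℂ) else 0)) * ee N ((x.2 + w.2) * y1) := by
      intro y1; ring
    rw [Finset.sum_congr rfl (fun y1 _ => step2 y1), ← Finset.mul_sum, sum_ee]
    ring
  -- conclude
  ext x w
  rw [hLHS, hRHS]
  by_cases h1 : x.1 + w.1 = 0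
  · by_cases h2 : x.2 + w.2 = 0
    · have : ee N (x.1 * x.2 + -(w.1 * w.2)) = 1 := by
        rw [show (x.1 * x.2 + -(w.1 * w.2) : ZMod N) = 0 by
          have e1 : w.1 = -x.1 := by linear_combination h1
          have e2 : w.2 = -x.2 := by linear_combination h2
          rw [e1, e2]; ring, ee_zero]
      rw [this]
      ring
    · simp [h1, h2]
  · simp [h1]
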